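/- Let X be a real reflexive Banach space and F: X → X* a bijection. Let A: X ⇉ X* be such that T_A = (A+F)^{-1}F and T_{A^{-1}} = (A^{-1}+F^{-1})^{-1}F^{-1} are single-valued where defined. For x* ∈ dom T_{A^{-1}} and y* ∈ X*, the following are equivalent: (i) y* = T_{A^{-1}} x*; (ii) y* = F( F^{-1}x* − T_A( F^{-1}( y* + F(F^{-1}x* − F^{-1}y*) ) ) ). -/

import Mathlib

open NormedSpace

/-- Inverse-resolvent fixed point equation: for `x* ∈ dom T_{A⁻¹}` and `y* ∈ X*`,
`y* = T_{A⁻¹} x*` iff `y* = F(F⁻¹x* − T_A(F⁻¹(y* + F(F⁻¹x* − F⁻¹y*))))`. -/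
theorem stmt_9 {X : Type*} [NormedAddCommGroup X] [NormedSpace ℝ X] [CompleteSpace X]
    (hrefl : Function.Surjective (inclusionInDoubleDual ℝ X))
    (A : X → Set (StrongDual ℝ X))
    (F : X → StrongDual ℝ X) (Finv : StrongDual ℝ X → X)
    (hF1 : ∀ x, Finv (F x) = x) (hF2 : ∀ s, F (Finv s) = s)
    (TA : X → X) (hTA : ∀ w u, TA w = u ↔ F w - F u ∈ A u)
    (TAi : StrongDual ℝ X → StrongDual ℝ X)
    (hTAi : ∀ ws us, TAi ws = us ↔ us ∈ A (Finv ws - Finv us))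
    (xs : StrongDual ℝ X)
    (hdom : ∃ us : StrongDual ℝ X, ∃ v : X, us ∈ A v ∧ Finv xs = v + Finv us)
    (ys : StrongDual ℝ X) :
    ys = TAi xs ↔
      ys = F (Finv xs - TA (Finv (ys + F (Finv xs - Finv ys)))) := by
  constructor
  · intro h
    have h1 : ys ∈ A (Finv xs - Finv ys) := (hTAi xs ys).mp h.symm
    have h2 : TA (Finv (ys + F (Finv xs - Finv ys))) = Finv xs - Finv ys := by
      rw [hTA, hF2]
      simpa using h1
    rw [h2]
    have : Finv xs - (Finv xs - Finv ys) = Finv ys := by abel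
    rw [this, hF2]
  · intro h
    have h2 : TA (Finv (ys + F (Finv xs - Finv ys))) = Finv xs - Finv ys := by
      have := congrArg Finv h
      rw [hF1] at this
      have : Finv xs - TA (Finv (ys + F (Finv xs - Finv ys))) = Finv ys := by
        rw [← this]
      linear_combination (norm := abel) -this
    have h1 := (hTA _ _).mp h2
    rw [hF2] at h1
    simp only [add_sub_cancel_right] at h1
    exact ((hTAi xs ys).mpr h1).symm
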